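/- arXiv:2107.00640 — 3 statements merged into one kernel-verified Lean document; each statement's English description precedes it below -/
import Mathlib

section
/- If θ₁ and θ₂ have symmetric, continuous, strictly positive joint density on [0,1]² and Corr(θ₁,θ₂) ≠ 0, then there exists t ∈ (0,1) such that E[θ₁ | θ₂ = t]/E[θ₁] ≠ (1 − E[θ₁ | θ₂ = t])/(1 − E[θ₁]). -/
open Set intervalIntegral

/-- If θ₁, θ₂ (symmetric, continuous, positive joint density on [0,1]²) are
correlated (Cov ≠ 0, i.e. E[θ₁θ₂] ≠ E[θ₁]²), then there is t ∈ (0,1) with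
E[θ₁|θ₂=t]/E[θ₁] ≠ (1 − E[θ₁|θ₂=t])/(1 − E[θ₁]). -/
theorem stmt4 (f : ℝ → ℝ → ℝ)
    (hsymm : ∀ x y, f x y = f y x)
    (hcont : ContinuousOn (fun p : ℝ × ℝ => f p.1 p.2) (Icc 0 1 ×ˢ Icc 0 1))
    (hpos : ∀ x ∈ Icc (0:ℝ) 1, ∀ y ∈ Icc (0:ℝ) 1, 0 < f x y)
    (hdens : (∫ x in (0:ℝ)..1, ∫ y in (0:ℝ)..1, f x y) = 1)
    (E : ℝ) (hE : E = ∫ x in (0:ℝ)..1, x * ∫ y in (0:ℝ)..1, f x y)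
    (hE01 : E ∈ Ioo (0:ℝ) 1)
    (cond : ℝ → ℝ)
    (hcond : ∀ t, cond t = (∫ s in (0:ℝ)..1, s * f s t) / (∫ s in (0:ℝ)..1, f s t))
    (hcov : (∫ t in (0:ℝ)..1, ∫ s in (0:ℝ)..1, s * t * f s t) ≠ E ^ 2) :
    ∃ t ∈ Ioo (0:ℝ) 1, cond t / E ≠ (1 - cond t) / (1 - E) := by
  by_contra hno
  push_neg at hno
  obtain ⟨hE0, hE1⟩ := hE01
  have hEne : E ≠ 0 := ne_of_gt hE0
  have hE1' : (1:ℝ) - E ≠ 0 := by linarith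
  set D : ℝ → ℝ := fun t => ∫ s in (0:ℝ)..1, f s t with hD
  set N : ℝ → ℝ := fun t => ∫ s in (0:ℝ)..1, s * f s t with hN
  have hDpos : ∀ t ∈ Icc (0:ℝ) 1, 0 < D t := by
    intro t ht
    have hcont' : ContinuousOn (fun s => f s t) (Icc 0 1) := by
      have hmap : Set.MapsTo (fun s : ℝ => (s, t)) (Icc 0 1) (Icc 0 1 ×ˢ Icc 0 1) :=
        fun s hs => ⟨hs, ht⟩
      exact hcont.comp ((Continuous.prodMk continuous_id continuous_const).continuousOn) hmap
    have hint : IntervalIntegrable (fun s => f s t) MeasureTheory.volume 0 1 := by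
      apply ContinuousOn.intervalIntegrable
      rwa [uIcc_of_le (by norm_num : (0:ℝ) ≤ 1)]
    exact intervalIntegral.intervalIntegral_pos_of_pos_on hint
      (fun x hx => hpos x (Ioo_subset_Icc_self hx) t ht) one_pos
  have hkey : ∀ t ∈ Ioo (0:ℝ) 1, N t = E * D t := by
    intro t ht
    have h := hno t ht
    have hc : cond t = E := by
      rw [div_eq_div_iff hEne hE1'] at h
      nlinarith [h]
    have hDne : D t ≠ 0 := ne_of_gt (hDpos t (Ioo_subset_Icc_self ht))
    have := hcond t
    rw [hc] at this
    rw [eq_div_iff (show (∫ s in (0:ℝ)..1, f s t) ≠ 0 from hDne)] at this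
    exact this.symm
  apply hcov
  have step1 : ∀ t : ℝ, (∫ s in (0:ℝ)..1, s * t * f s t) = t * N t := by
    intro t
    rw [hN, ← intervalIntegral.integral_const_mul]
    apply intervalIntegral.integral_congr
    intro s _
    ring
  have h1ne : ∀ᵐ x : ℝ ∂MeasureTheory.volume, x ≠ 1 := by
    rw [MeasureTheory.ae_iff]
    simp only [not_not, Set.setOf_eq_eq_singleton']
    exact Real.volume_singleton
  have step2 : (∫ t in (0:ℝ)..1, t * N t) = ∫ t in (0:ℝ)..1, E * (t * D t) := by
    apply intervalIntegral.integral_congr_ae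
    filter_upwards [h1ne] with x hx hxI
    rw [Set.uIoc_of_le (by norm_num : (0:ℝ) ≤ 1)] at hxI
    have hxo : x ∈ Ioo (0:ℝ) 1 := ⟨hxI.1, lt_of_le_of_ne hxI.2 hx⟩
    rw [hkey x hxo]; ring
  have hinner : ∀ x : ℝ, (∫ y in (0:ℝ)..1, f x y) = D x := by
    intro x
    rw [hD]
    apply intervalIntegral.integral_congr
    intro y _
    exact hsymm x y
  have hE' : (∫ t in (0:ℝ)..1, t * D t) = E := by
    rw [hE]; simp only [hinner]
  calc (∫ t in (0:ℝ)..1, ∫ s in (0:ℝ)..1, s * t * f s t)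
      = ∫ t in (0:ℝ)..1, t * N t := by simp only [step1]
    _ = ∫ t in (0:ℝ)..1, E * (t * D t) := step2
    _ = E * ∫ t in (0:ℝ)..1, t * D t := intervalIntegral.integral_const_mul _ _
    _ = E * E := by rw [hE']
    _ = E ^ 2 := by ring
end

section
/- Let g: [0,1] → (0,∞) be continuous and define b(θ) = ∫₀^θ x·exp(−∫ₓ^θ g(y)dy)·g(x) dx. Then b(0)=0, b is continuously differentiable on (0,1], b'(θ) = (θ − b(θ))·g(θ), and 0 ≤ b(θ) < θ for all θ ∈ (0,1]. -/
open Set intervalIntegral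

/-- For continuous positive g, the function
b(θ) = ∫₀^θ x·exp(−∫ₓ^θ g)·g(x) dx satisfies b(0)=0,
b'(θ) = (θ−b(θ))·g(θ) and 0 ≤ b(θ) < θ on (0,1]. -/
theorem stmt6 (g : ℝ → ℝ) (hg : Continuous g)
    (hgpos : ∀ y ∈ Icc (0:ℝ) 1, 0 < g y)
    (b : ℝ → ℝ)
    (hb : ∀ θ, b θ = ∫ x in (0:ℝ)..θ, x * Real.exp (-∫ y in x..θ, g y) * g x) :
    b 0 = 0 ∧
      ∀ θ ∈ Ioc (0:ℝ) 1, HasDerivAt b ((θ - b θ) * g θ) θ ∧ 0 ≤ b θ ∧ b θ < θ := by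
  set G : ℝ → ℝ := fun t => ∫ y in (0:ℝ)..t, g y with hGdef
  have hG : ∀ t, HasDerivAt G (g t) t := by
    intro t
    exact intervalIntegral.integral_hasDerivAt_right (hg.intervalIntegrable _ _)
      (hg.stronglyMeasurableAtFilter _ _) hg.continuousAt
  have hGc : Continuous G := by
    refine continuous_iff_continuousAt.mpr fun t => (hG t).continuousAt
  have hsub : ∀ x θ : ℝ, (∫ y in x..θ, g y) = G θ - G x := by
    intro x θ
    rw [hGdef]
    simp only []
    rw [← intervalIntegral.integral_interval_sub_left (hg.intervalIntegrable _ _)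
      (hg.intervalIntegrable _ _)]
  set φ : ℝ → ℝ := fun x => x * Real.exp (G x) * g x with hφdef
  have hφc : Continuous φ := (continuous_id.mul (Real.continuous_exp.comp hGc)).mul hg
  set F : ℝ → ℝ := fun t => ∫ x in (0:ℝ)..t, φ x with hFdef
  have hF : ∀ t, HasDerivAt F (φ t) t := by
    intro t
    exact intervalIntegral.integral_hasDerivAt_right (hφc.intervalIntegrable _ _)
      (hφc.stronglyMeasurableAtFilter _ _) hφc.continuousAt
  have hbF : ∀ θ, b θ = Real.exp (-G θ) * F θ := by
    intro θ
    rw [hb θ, hFdef]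
    rw [← intervalIntegral.integral_const_mul]
    refine intervalIntegral.integral_congr fun x _ => ?_
    rw [hsub x θ, hφdef]
    simp only [neg_sub, Real.exp_sub]
    rw [Real.exp_neg]
    field_simp
  have hb0 : b 0 = 0 := by rw [hb]; simp
  refine ⟨hb0, fun θ hθ => ?_⟩
  obtain ⟨hθ0, hθ1⟩ := hθ
  -- derivative
  have hderiv : HasDerivAt b ((θ - b θ) * g θ) θ := by
    have h1 : HasDerivAt (fun t => Real.exp (-G t)) (Real.exp (-G θ) * (-g θ)) θ :=
      (hG θ).neg.exp
    have h2 : HasDerivAt (fun t => Real.exp (-G t) * F t) _ θ := (h1.mul (hF θ))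
    have heq : (fun t => Real.exp (-G t) * F t) = b := by
      funext t; rw [hbF t]
    rw [heq] at h2
    convert h2 using 1
    rw [hbF θ]
    simp only [hφdef]
    have hexp : Real.exp (-G θ) * Real.exp (G θ) = 1 := by
      rw [← Real.exp_add]; simp
    linear_combination (-(θ * g θ)) * hexp
  -- nonneg
  have hint_nonneg : 0 ≤ b θ := by
    rw [hb θ]
    apply intervalIntegral.integral_nonneg hθ0.le
    intro x hx
    have hx01 : x ∈ Icc (0:ℝ) 1 := ⟨hx.1, hx.2.trans hθ1⟩
    have hgx := hgpos x hx01
    have hx0 : (0:ℝ) ≤ x := hx.1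
    positivity
  -- strict upper bound
  have hK : (∫ x in (0:ℝ)..θ, Real.exp (G x) * g x) = Real.exp (G θ) - 1 := by
    have := intervalIntegral.integral_eq_sub_of_hasDerivAt (f := fun x => Real.exp (G x))
      (f' := fun x => Real.exp (G x) * g x) (a := 0) (b := θ)
      (fun x _ => ((hG x).exp)) (((Real.continuous_exp.comp hGc).mul hg).intervalIntegrable _ _)
    rw [this]
    simp [hGdef]
  have hFle : F θ ≤ θ * (Real.exp (G θ) - 1) := by
    rw [hFdef, ← hK, ← intervalIntegral.integral_const_mul]
    apply intervalIntegral.integral_mono_on hθ0.le (hφc.intervalIntegrable _ _)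
      ((continuous_const.mul ((Real.continuous_exp.comp hGc).mul hg)).intervalIntegrable _ _)
    intro x hx
    have hx01 : x ∈ Icc (0:ℝ) 1 := ⟨hx.1, hx.2.trans hθ1⟩
    have hg0 := (hgpos x hx01).le
    have he := Real.exp_pos (G x)
    rw [hφdef]
    simp only [mul_assoc]
    exact mul_le_mul_of_nonneg_right hx.2 (by positivity)
  have hlt : b θ < θ := by
    rw [hbF θ]
    have hepos : 0 < Real.exp (-G θ) := Real.exp_pos _
    have h1 : Real.exp (-G θ) * F θ ≤ Real.exp (-G θ) * (θ * (Real.exp (G θ) - 1)) :=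
      mul_le_mul_of_nonneg_left hFle hepos.le
    have hexp : Real.exp (-G θ) * Real.exp (G θ) = 1 := by
      rw [← Real.exp_add]; simp
    have h2 : Real.exp (-G θ) * (θ * (Real.exp (G θ) - 1)) = θ - θ * Real.exp (-G θ) := by
      linear_combination θ * hexp
    nlinarith [mul_pos hθ0 hepos]
  exact ⟨hderiv, hint_nonneg, hlt⟩
end

section
/- For α > 0, the random variables θ₁, θ₂ with joint density f_α(θ₁,θ₂) = ((2+α)/2)(1−|θ₁−θ₂|)^α on [0,1]² are positively correlated: Cov(θ₁,θ₂) > 0. -/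
open Set intervalIntegral

lemma intR (r a b : ℝ) (hr : -1 < r) : ∫ t in a..b, t ^ r = (b^(r+1) - a^(r+1))/(r+1) :=
  integral_rpow (Or.inl hr)

lemma contR (r : ℝ) (hr : 0 ≤ r) : Continuous fun t : ℝ => t ^ r :=
  Real.continuous_rpow_const hr

lemma Jpow (β : ℝ) (hβ : 0 < β) : ∫ t in (0:ℝ)..1, t ^ β = 1/(β+1) := by
  rw [intR _ _ _ (by linarith), Real.one_rpow, Real.zero_rpow (by positivity)]
  ring

lemma Jmul (β : ℝ) (hβ : 0 < β) : ∫ t in (0:ℝ)..1, t * t ^ β = 1/(β+2) := by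
  rw [intervalIntegral.integral_congr (g := fun t => t ^ (β+1)) ?_]
  · rw [Jpow _ (by linarith)]; ring_nf
  · intro t ht
    rw [uIcc_of_le (by norm_num)] at ht
    show t * t ^ β = t ^ (β+1)
    rw [Real.rpow_add' ht.1 (by positivity), Real.rpow_one]
    ring

lemma Jw (β : ℝ) (hβ : 0 < β) : ∫ x in (0:ℝ)..1, (1-x) ^ β = 1/(β+1) := by
  rw [show (fun x : ℝ => (1-x)^β) = fun x => (fun t : ℝ => t ^ β) (1 - x) from rfl,
    integral_comp_sub_left (fun t : ℝ => t ^ β) 1]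
  norm_num [Jpow _ hβ]

lemma Jxw (β : ℝ) (hβ : 0 < β) : ∫ x in (0:ℝ)..1, x * (1-x) ^ β = 1/(β+1) - 1/(β+2) := by
  rw [show (fun x : ℝ => x * (1-x)^β) = fun x => (fun t : ℝ => t ^ β - t * t ^ β) (1 - x) from
    funext fun x => by show x * (1-x)^β = (1-x)^β - (1-x)*(1-x)^β; ring,
    integral_comp_sub_left (fun t : ℝ => t ^ β - t * t ^ β) 1]
  norm_num
  rw [integral_sub ((contR β hβ.le).intervalIntegrable _ _)
    (((by fun_prop (disch:=positivity) : Continuous fun t : ℝ => t * t ^ β)).intervalIntegrable _ _),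
    Jpow _ hβ, Jmul _ hβ]
  ring

lemma intMul (α a b : ℝ) (hα : 0 < α) (ha : 0 ≤ a) (hab : a ≤ b) :
    ∫ t in a..b, t * t ^ α = (b^(α+2) - a^(α+2))/(α+2) := by
  rw [intervalIntegral.integral_congr (g := fun t => t ^ (α+1)) ?_]
  · rw [intR _ _ _ (by linarith), show α+1+1 = α+2 by ring]
  · intro t ht
    rw [uIcc_of_le hab] at ht
    show t * t ^ α = t ^ (α+1)
    rw [Real.rpow_add' (le_trans ha ht.1) (by positivity), Real.rpow_one]
    ring

lemma key1 (α x : ℝ) (hα : 0 < α) (hx : x ∈ Icc (0:ℝ) 1) :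
    ∫ y in (0:ℝ)..1, (1-|x-y|)^α = (2 - x^(α+1) - (1-x)^(α+1))/(α+1) := by
  obtain ⟨hx0, hx1⟩ := hx
  have hc : Continuous fun y : ℝ => (1 - |x - y|) ^ α :=
    (contR α hα.le).comp (by fun_prop)
  rw [← integral_add_adjacent_intervals (a := (0:ℝ)) (b := x) (c := 1)
    (hc.intervalIntegrable _ _) (hc.intervalIntegrable _ _)]
  have hA : ∫ y in (0:ℝ)..x, (1-|x-y|)^α = (1 - (1-x)^(α+1))/(α+1) := by
    rw [intervalIntegral.integral_congr (g := fun y => (fun t : ℝ => t^α) (y + (1-x))) ?_]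
    · rw [integral_comp_add_right (fun t : ℝ => t^α) (1-x), intR _ _ _ (by linarith),
        show x + (1-x) = 1 by ring, zero_add, Real.one_rpow]
    · intro y hy; rw [uIcc_of_le hx0] at hy
      show (1-|x-y|)^α = (y+(1-x))^α
      rw [abs_of_nonneg (by linarith [hy.2])]; congr 1; ring
  have hB : ∫ y in x..1, (1-|x-y|)^α = (1 - x^(α+1))/(α+1) := by
    rw [intervalIntegral.integral_congr (g := fun y => (fun t : ℝ => t^α) ((1+x) - y)) ?_]
    · rw [integral_comp_sub_left (fun t : ℝ => t^α) (1+x), intR _ _ _ (by linarith),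
        show 1+x-1 = x by ring, show 1+x-x = 1 by ring, Real.one_rpow]
    · intro y hy; rw [uIcc_of_le hx1] at hy
      show (1-|x-y|)^α = ((1+x)-y)^α
      rw [abs_of_nonpos (by linarith [hy.1])]; congr 1; ring
  rw [hA, hB]; ring

lemma key2 (α x : ℝ) (hα : 0 < α) (hx : x ∈ Icc (0:ℝ) 1) :
    ∫ y in (0:ℝ)..1, y * (1-|x-y|)^α =
      (x^(α+2) - (1-x)^(α+2))/(α+2) + (2*x - x^(α+1) - x^(α+2) + (1-x)^(α+2))/(α+1) := by
  obtain ⟨hx0, hx1⟩ := hx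
  have hc : Continuous fun y : ℝ => y * (1 - |x - y|) ^ α :=
    continuous_id.mul ((contR α hα.le).comp (by fun_prop))
  rw [← integral_add_adjacent_intervals (a := (0:ℝ)) (b := x) (c := 1)
    (hc.intervalIntegrable _ _) (hc.intervalIntegrable _ _)]
  have hA : ∫ y in (0:ℝ)..x, y * (1-|x-y|)^α
      = (1 - (1-x)^(α+2))/(α+2) - (1-x) * ((1 - (1-x)^(α+1))/(α+1)) := by
    rw [intervalIntegral.integral_congr
        (g := fun y => (fun t : ℝ => (t - (1-x)) * t^α) (y + (1-x))) ?_]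
    · rw [integral_comp_add_right (fun t : ℝ => (t - (1-x)) * t^α) (1-x),
        show x + (1-x) = 1 by ring, zero_add]
      rw [intervalIntegral.integral_congr
          (g := fun t : ℝ => t * t^α - (1-x) * t^α) (fun t _ => by ring)]
      rw [integral_sub
          (((by fun_prop (disch := positivity) : Continuous fun t : ℝ => t * t ^ α)).intervalIntegrable _ _)
          ((by fun_prop (disch := positivity) : Continuous fun t : ℝ => (1-x) * t ^ α).intervalIntegrable _ _),
        intervalIntegral.integral_const_mul, intMul α _ _ hα (by linarith) (by linarith),
        intR _ _ _ (by linarith)]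
      simp only [Real.one_rpow]
    · intro y hy; rw [uIcc_of_le hx0] at hy
      show y * (1-|x-y|)^α = (y + (1-x) - (1-x)) * (y+(1-x))^α
      rw [abs_of_nonneg (by linarith [hy.2])]
      rw [show y + (1-x) - (1-x) = y by ring]; congr 2; ring
  have hB : ∫ y in x..1, y * (1-|x-y|)^α
      = (1+x) * ((1 - x^(α+1))/(α+1)) - (1 - x^(α+2))/(α+2) := by
    rw [intervalIntegral.integral_congr
        (g := fun y => (fun t : ℝ => ((1+x) - t) * t^α) ((1+x) - y)) ?_]
    · rw [integral_comp_sub_left (fun t : ℝ => ((1+x) - t) * t^α) (1+x),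
        show 1+x-1 = x by ring, show 1+x-x = 1 by ring]
      rw [intervalIntegral.integral_congr
          (g := fun t : ℝ => (1+x) * t^α - t * t^α) (fun t _ => by ring)]
      rw [integral_sub
          ((by fun_prop (disch := positivity) : Continuous fun t : ℝ => (1+x) * t ^ α).intervalIntegrable _ _)
          (((by fun_prop (disch := positivity) : Continuous fun t : ℝ => t * t ^ α)).intervalIntegrable _ _),
        intervalIntegral.integral_const_mul, intMul α _ _ hα hx0 hx1,
        intR _ _ _ (by linarith)]
      simp only [Real.one_rpow]
    · intro y hy; rw [uIcc_of_le hx1] at hy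
      show y * (1-|x-y|)^α = (1 + x - (1+x-y)) * ((1+x)-y)^α
      rw [abs_of_nonpos (by linarith [hy.1])]
      rw [show 1 + x - (1+x-y) = y by ring]; congr 2; ring
  rw [hA, hB]
  have e1 : x^(α+2) = x^(α+1) * x := by
    rw [show α+2 = (α+1)+1 by ring, Real.rpow_add' hx0 (by positivity), Real.rpow_one]
  have e2 : (1-x)^(α+2) = (1-x)^(α+1) * (1-x) := by
    rw [show α+2 = (α+1)+1 by ring, Real.rpow_add' (by linarith) (by positivity), Real.rpow_one]
  rw [e1, e2]
  field_simp
  ring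

open MeasureTheory in
lemma master (α c1 c2 c3 c4 c5 c6 c7 c8 c9 : ℝ) (hα : 0 < α) :
    ∫ x in (0:ℝ)..1,
      (c1 * (x * x^(α+1)) + (c2 * (x * x^(α+2)) + (c3 * (x * (1-x)^(α+1)) +
       (c4 * (x * (1-x)^(α+2)) + (c5 * (x*x) + (c6 * x + (c7 * x^(α+1) +
       (c8 * x^(α+2) + c9 * (1-x)^(α+2)))))))))
    = c1 * (1/(α+3)) + c2 * (1/(α+4)) + c3 * (1/(α+2) - 1/(α+3))
      + c4 * (1/(α+3) - 1/(α+4)) + c5 * (1/3) + c6 * (1/2) + c7 * (1/(α+2))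
      + c8 * (1/(α+3)) + c9 * (1/(α+3)) := by
  have I1 : IntervalIntegrable (fun x : ℝ => x * x^(α+1)) volume 0 1 :=
    (by fun_prop (disch := positivity) :
      Continuous fun x : ℝ => x * x^(α+1)).intervalIntegrable _ _
  have I2 : IntervalIntegrable (fun x : ℝ => x * x^(α+2)) volume 0 1 :=
    (by fun_prop (disch := positivity) :
      Continuous fun x : ℝ => x * x^(α+2)).intervalIntegrable _ _
  have I3 : IntervalIntegrable (fun x : ℝ => x * (1-x)^(α+1)) volume 0 1 :=
    (by fun_prop (disch := positivity) :
      Continuous fun x : ℝ => x * (1-x)^(α+1)).intervalIntegrable _ _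
  have I4 : IntervalIntegrable (fun x : ℝ => x * (1-x)^(α+2)) volume 0 1 :=
    (by fun_prop (disch := positivity) :
      Continuous fun x : ℝ => x * (1-x)^(α+2)).intervalIntegrable _ _
  have I5 : IntervalIntegrable (fun x : ℝ => x * x) volume 0 1 :=
    (continuous_id.mul continuous_id).intervalIntegrable _ _
  have I6 : IntervalIntegrable (fun x : ℝ => x) volume 0 1 :=
    continuous_id.intervalIntegrable _ _
  have I7 : IntervalIntegrable (fun x : ℝ => x^(α+1)) volume 0 1 :=
    (contR _ (by positivity)).intervalIntegrable _ _
  have I8 : IntervalIntegrable (fun x : ℝ => x^(α+2)) volume 0 1 :=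
    (contR _ (by positivity)).intervalIntegrable _ _
  have I9 : IntervalIntegrable (fun x : ℝ => (1-x)^(α+2)) volume 0 1 :=
    (by fun_prop (disch := positivity) :
      Continuous fun x : ℝ => (1-x)^(α+2)).intervalIntegrable _ _
  rw [integral_add (I1.const_mul c1) ((I2.const_mul c2).add ((I3.const_mul c3).add
      ((I4.const_mul c4).add ((I5.const_mul c5).add ((I6.const_mul c6).add
      ((I7.const_mul c7).add ((I8.const_mul c8).add (I9.const_mul c9)))))))),
    integral_add (I2.const_mul c2) ((I3.const_mul c3).add ((I4.const_mul c4).add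
      ((I5.const_mul c5).add ((I6.const_mul c6).add ((I7.const_mul c7).add
      ((I8.const_mul c8).add (I9.const_mul c9))))))),
    integral_add (I3.const_mul c3) ((I4.const_mul c4).add ((I5.const_mul c5).add
      ((I6.const_mul c6).add ((I7.const_mul c7).add ((I8.const_mul c8).add
      (I9.const_mul c9)))))),
    integral_add (I4.const_mul c4) ((I5.const_mul c5).add ((I6.const_mul c6).add
      ((I7.const_mul c7).add ((I8.const_mul c8).add (I9.const_mul c9))))),
    integral_add (I5.const_mul c5) ((I6.const_mul c6).add ((I7.const_mul c7).add
      ((I8.const_mul c8).add (I9.const_mul c9)))),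
    integral_add (I6.const_mul c6) ((I7.const_mul c7).add ((I8.const_mul c8).add
      (I9.const_mul c9))),
    integral_add (I7.const_mul c7) ((I8.const_mul c8).add (I9.const_mul c9)),
    integral_add (I8.const_mul c8) (I9.const_mul c9)]
  simp only [intervalIntegral.integral_const_mul]
  rw [intervalIntegral.integral_const_mul c6 (fun x : ℝ => x)]
  rw [Jmul _ (by positivity), Jmul _ (by positivity), Jxw _ (by positivity),
    Jxw _ (by positivity), Jpow _ (by positivity), Jpow _ (by positivity),
    Jw _ (by positivity), integral_id,
    show (fun x : ℝ => x * x) = fun x : ℝ => x^(2:ℕ) from funext fun x => by ring,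
    integral_pow]
  norm_num
  ring

/-- For α > 0, the parametric density f_α induces positive covariance:
Cov(θ₁,θ₂) = E[θ₁θ₂] − E[θ₁]E[θ₂] > 0. -/
theorem stmt17 (α : ℝ) (hα : 0 < α) :
    0 < (∫ x in (0:ℝ)..1, ∫ y in (0:ℝ)..1,
          x * y * (((2 + α) / 2) * (1 - |x - y|) ^ α))
        - (∫ x in (0:ℝ)..1, ∫ y in (0:ℝ)..1,
            x * (((2 + α) / 2) * (1 - |x - y|) ^ α))
          * (∫ x in (0:ℝ)..1, ∫ y in (0:ℝ)..1,
              y * (((2 + α) / 2) * (1 - |x - y|) ^ α)) := by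
  have hp : α + 1 ≠ 0 := by positivity
  have hq : α + 2 ≠ 0 := by positivity
  have e1 : (∫ x in (0:ℝ)..1, ∫ y in (0:ℝ)..1,
        x * y * (((2 + α) / 2) * (1 - |x - y|) ^ α))
      = ∫ x in (0:ℝ)..1,
        ((-((2+α)/2)/(α+1)) * (x * x^(α+1)) + (((2+α)/2/(α+2) - (2+α)/2/(α+1)) * (x * x^(α+2)) +
         ((0:ℝ) * (x * (1-x)^(α+1)) + ((-((2+α)/2)/(α+2) + (2+α)/2/(α+1)) * (x * (1-x)^(α+2)) +
         (((2+α)/(α+1)) * (x*x) + ((0:ℝ) * x + ((0:ℝ) * x^(α+1) +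
         ((0:ℝ) * x^(α+2) + (0:ℝ) * (1-x)^(α+2))))))))) := by
    refine intervalIntegral.integral_congr fun x hx => ?_
    rw [uIcc_of_le (by norm_num)] at hx
    show (∫ y in (0:ℝ)..1, x * y * (((2 + α) / 2) * (1 - |x - y|) ^ α)) = _
    rw [show (fun y : ℝ => x * y * (((2 + α) / 2) * (1 - |x - y|) ^ α))
        = fun y => (((2+α)/2) * x) * (y * (1 - |x - y|) ^ α) from funext fun y => by ring,
      intervalIntegral.integral_const_mul, key2 α x hα hx]
    field_simp
    ring
  have e2 : (∫ x in (0:ℝ)..1, ∫ y in (0:ℝ)..1,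
        x * (((2 + α) / 2) * (1 - |x - y|) ^ α))
      = ∫ x in (0:ℝ)..1,
        ((-((2+α)/2)/(α+1)) * (x * x^(α+1)) + ((0:ℝ) * (x * x^(α+2)) +
         ((-((2+α)/2)/(α+1)) * (x * (1-x)^(α+1)) + ((0:ℝ) * (x * (1-x)^(α+2)) +
         ((0:ℝ) * (x*x) + (((2+α)/(α+1)) * x + ((0:ℝ) * x^(α+1) +
         ((0:ℝ) * x^(α+2) + (0:ℝ) * (1-x)^(α+2))))))))) := by
    refine intervalIntegral.integral_congr fun x hx => ?_
    rw [uIcc_of_le (by norm_num)] at hx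
    show (∫ y in (0:ℝ)..1, x * (((2 + α) / 2) * (1 - |x - y|) ^ α)) = _
    rw [show (fun y : ℝ => x * (((2 + α) / 2) * (1 - |x - y|) ^ α))
        = fun y => (((2+α)/2) * x) * ((1 - |x - y|) ^ α) from funext fun y => by ring,
      intervalIntegral.integral_const_mul, key1 α x hα hx]
    field_simp
    ring
  have e3 : (∫ x in (0:ℝ)..1, ∫ y in (0:ℝ)..1,
        y * (((2 + α) / 2) * (1 - |x - y|) ^ α))
      = ∫ x in (0:ℝ)..1,
        ((0:ℝ) * (x * x^(α+1)) + ((0:ℝ) * (x * x^(α+2)) +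
         ((0:ℝ) * (x * (1-x)^(α+1)) + ((0:ℝ) * (x * (1-x)^(α+2)) +
         ((0:ℝ) * (x*x) + (((2+α)/(α+1)) * x + ((-((2+α)/2)/(α+1)) * x^(α+1) +
         (((2+α)/2/(α+2) - (2+α)/2/(α+1)) * x^(α+2) +
          (-((2+α)/2)/(α+2) + (2+α)/2/(α+1)) * (1-x)^(α+2))))))))) := by
    refine intervalIntegral.integral_congr fun x hx => ?_
    rw [uIcc_of_le (by norm_num)] at hx
    show (∫ y in (0:ℝ)..1, y * (((2 + α) / 2) * (1 - |x - y|) ^ α)) = _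
    rw [show (fun y : ℝ => y * (((2 + α) / 2) * (1 - |x - y|) ^ α))
        = fun y => ((2+α)/2) * (y * (1 - |x - y|) ^ α) from funext fun y => by ring,
      intervalIntegral.integral_const_mul, key2 α x hα hx]
    field_simp
    ring
  rw [e1, master _ _ _ _ _ _ _ _ _ _ hα, e2, master _ _ _ _ _ _ _ _ _ _ hα,
    e3, master _ _ _ _ _ _ _ _ _ _ hα]
  have key : (-((2+α)/2)/(α+1)) * (1/(α+3)) + ((2+α)/2/(α+2) - (2+α)/2/(α+1)) * (1/(α+4))
      + (0:ℝ) * (1/(α+2) - 1/(α+3)) + (-((2+α)/2)/(α+2) + (2+α)/2/(α+1)) * (1/(α+3) - 1/(α+4))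
      + ((2+α)/(α+1)) * (1/3) + (0:ℝ) * (1/2) + (0:ℝ) * (1/(α+2)) + (0:ℝ) * (1/(α+3)) + (0:ℝ) * (1/(α+3))
      - ((-((2+α)/2)/(α+1)) * (1/(α+3)) + (0:ℝ) * (1/(α+4)) + (-((2+α)/2)/(α+1)) * (1/(α+2) - 1/(α+3))
        + (0:ℝ) * (1/(α+3) - 1/(α+4)) + (0:ℝ) * (1/3) + ((2+α)/(α+1)) * (1/2) + (0:ℝ) * (1/(α+2))
        + (0:ℝ) * (1/(α+3)) + (0:ℝ) * (1/(α+3)))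
      * ((0:ℝ) * (1/(α+3)) + (0:ℝ) * (1/(α+4)) + (0:ℝ) * (1/(α+2) - 1/(α+3))
        + (0:ℝ) * (1/(α+3) - 1/(α+4)) + (0:ℝ) * (1/3) + ((2+α)/(α+1)) * (1/2)
        + (-((2+α)/2)/(α+1)) * (1/(α+2)) + ((2+α)/2/(α+2) - (2+α)/2/(α+1)) * (1/(α+3))
        + (-((2+α)/2)/(α+2) + (2+α)/2/(α+1)) * (1/(α+3)))
      = α * (α+5) / (12 * (α+3) * (α+4)) := by
    have h3 : α + 3 ≠ 0 := by positivity
    have h4 : α + 4 ≠ 0 := by positivity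
    field_simp
    ring
  rw [key]
  positivity
end
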